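/- Let K be a field of characteristic 2 and let a, b ∈ ℤ with a ≡ b (mod 2). Then for every u ∈ (U_1)_a and every v ∈ (U_1)_b one has ⁅u, v⁆ = 0. (The graded identities ⁅x_1^a, x_2^b⁆, with a and b of the same parity, hold in U_1.) -/

import Mathlib

open LaurentPolynomial

variable (K : Type*) [Field K]

/-- `U_1`, the Lie algebra of `K`-linear derivations of `K[t, t⁻¹]`. -/
abbrev U1 (K : Type*) [Field K] := Derivation K (LaurentPolynomial K) (LaurentPolynomial K)

/-- Evaluation of a derivation of `K[t,t⁻¹]` at `t`, as a linear map. -/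
noncomputable def evalT : U1 K →ₗ[K] LaurentPolynomial K where
  toFun D := D (T 1)
  map_add' D E := by simp
  map_smul' c D := by simp

/-- The homogeneous component `(U_1)_a = {D | D t ∈ K • t^{a+1}}` of the canonical
ℤ-grading of `U_1`. -/
noncomputable def U1comp (a : ℤ) : Submodule K (U1 K) :=
  (Submodule.span K ({T (a + 1)} : Set (LaurentPolynomial K))).comap (evalT K)

lemma T_mul_T (m n k : ℤ) (h : m + n = k) :
    (T m : LaurentPolynomial K) * T n = T k := by rw [← T_add, h]

lemma deriv_T_neg_one (D : U1 K) : D (T (-1)) = - (T (-1) * T (-1) * D (T 1)) := by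
  have h0 : D ((T 1 : LaurentPolynomial K) * T (-1)) = 0 := by
    rw [T_mul_T K 1 (-1) 0 (by ring), T_zero]; simp
  rw [Derivation.leibniz] at h0
  simp only [smul_eq_mul] at h0
  have := congrArg (fun x => (T (-1) : LaurentPolynomial K) * x) h0
  simp only [mul_add, ← mul_assoc, mul_zero] at this
  rw [T_mul_T K (-1) 1 0 (by ring), T_zero, one_mul] at this
  linear_combination this

lemma deriv_T (D : U1 K) (n : ℤ) : D (T n) = n • (T (n-1) * D (T 1)) := by
  induction n using Int.induction_on with
  | zero => simp [T_zero]
  | succ k ih =>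
    rw [T_add, Derivation.leibniz, ih]
    simp only [smul_eq_mul, zsmul_eq_mul]
    push_cast
    have hT : (T 1 : LaurentPolynomial K) * T ((k:ℤ) - 1) = T ((k:ℤ) + 1 - 1) :=
      T_mul_T K 1 ((k:ℤ)-1) _ (by ring)
    have hT2 : (T ((k:ℤ) + 1 - 1) : LaurentPolynomial K) * T 0 = T (k:ℤ) :=
      T_mul_T K _ 0 _ (by ring)
    rw [T_zero, mul_one] at hT2
    linear_combination (((k:ℕ) : LaurentPolynomial K)) * D (T 1) * hT - D (T 1) * hT2
  | pred k ih =>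
    rw [show (-(k : ℤ) - 1) = (-(k:ℤ)) + (-1) from by ring, T_add, Derivation.leibniz, ih,
      deriv_T_neg_one]
    simp only [smul_eq_mul, zsmul_eq_mul]
    push_cast
    have hA : (T (-(k:ℤ)) : LaurentPolynomial K) * (T (-1) * T (-1)) = T (-(k:ℤ) + -1 - 1) := by
      rw [T_mul_T K (-1) (-1) (-2) (by ring), T_mul_T K (-(k:ℤ)) (-2) (-(k:ℤ) + -1 - 1) (by ring)]
    have hB : (T (-1) : LaurentPolynomial K) * T (-(k:ℤ) - 1) = T (-(k:ℤ) + -1 - 1) :=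
      T_mul_T K (-1) (-(k:ℤ)-1) _ (by ring)
    linear_combination (norm := (push_cast; ring1)) (-(D (T 1))) * hA + (-(((k:ℤ)) : LaurentPolynomial K) * D (T 1)) * hB

lemma derivation_eq_zero (D : U1 K) (h : D (T 1) = 0) : D = 0 := by
  apply Derivation.ext
  intro p
  show D p = 0
  induction p using LaurentPolynomial.induction_on' with
  | add p q hp hq => simp [hp, hq]
  | C_mul_T n a =>
    rw [Derivation.leibniz, deriv_T, h, C_eq_algebraMap, Derivation.map_algebraMap]
    simp


/-- Lemma 3.1: in characteristic two, `⁅u, v⁆ = 0` whenever `u ∈ (U_1)_a`, `v ∈ (U_1)_b`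
with `a ≡ b (mod 2)`. -/
theorem bracket_eq_zero_of_sameParity [CharP K 2] (a b : ℤ) (hab : a ≡ b [ZMOD 2])
    (u v : U1 K) (hu : u ∈ U1comp K a) (hv : v ∈ U1comp K b) :
    ⁅u, v⁆ = 0 := by
  obtain ⟨c, hc⟩ := Submodule.mem_span_singleton.mp hu
  obtain ⟨d, hd⟩ := Submodule.mem_span_singleton.mp hv
  have hc' : u (T 1) = c • T (a + 1) := hc.symm
  have hd' : v (T 1) = d • T (b + 1) := hd.symm
  apply derivation_eq_zero
  have h1 : u (T (b+1)) = (b+1) • (T (b + 1 - 1) * (c • T (a+1))) := by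
    rw [deriv_T, hc']
  have h2 : v (T (a+1)) = (a+1) • (T (a + 1 - 1) * (d • T (b+1))) := by
    rw [deriv_T, hd']
  rw [Derivation.commutator_apply, hc', hd', Derivation.map_smul, Derivation.map_smul, h1, h2]
  have hTa : (T (b + 1 - 1) : LaurentPolynomial K) * (c • T (a + 1)) =
      c • T (a + b + 1) := by
    rw [mul_smul_comm, T_mul_T K _ _ (a + b + 1) (by ring)]
  have hTb : (T (a + 1 - 1) : LaurentPolynomial K) * (d • T (b + 1)) =
      d • T (a + b + 1) := by
    rw [mul_smul_comm, T_mul_T K _ _ (a + b + 1) (by ring)]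
  rw [hTa, hTb, smul_comm d, smul_comm c, smul_smul, smul_smul, mul_comm d c,
    ← sub_smul]
  have h0 : ((b + 1 - (a + 1) : ℤ)) • ((c*d) • (T (a + b + 1) : LaurentPolynomial K)) = 0 := by
    have hdvd : (2 : ℤ) ∣ (b + 1 - (a + 1)) := by
      have := Int.ModEq.dvd hab
      omega
    obtain ⟨m, hm⟩ := hdvd
    have h20 : ((2 : ℤ) : LaurentPolynomial K) = 0 := by
      have he : ((2:ℤ) : LaurentPolynomial K) = algebraMap K (LaurentPolynomial K) ((2:ℤ) : K) :=
        (map_intCast (algebraMap K (LaurentPolynomial K)) 2).symm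
      rw [he, Int.cast_two, show (2:K) = 0 from by exact_mod_cast CharP.cast_eq_zero K 2, map_zero]
    rw [hm, mul_zsmul, zsmul_eq_mul, h20, zero_mul]
  exact h0
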